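/- Abstract first-order convergence from stability, invariance and local error (telescoping/Lady Windermere argument): Let X be a normed space, D ⊆ X a subset, N : D → [0,∞) a function, h₀ > 0, M ≥ 1, ω ∈ ℝ and K ≥ 0. Let T : [0,∞) → (X → X) satisfy T(0) = id and T(s)∘T(r) = T(s+r) for all s,r ≥ 0, and let F : (0,h₀] → (X → X) be a family of one-step maps. Assume: (stability) ‖F(h)^k x − F(h)^k y‖ ≤ M e^{ωkh} ‖x − y‖ for all h ∈ (0,h₀], k ∈ ℕ and x,y ∈ X; (invariance) T(s)(D) ⊆ D and N(T(s)x) ≤ M N(x) for all s ∈ [0,1] and x ∈ D; (local error) ‖F(h)x − T(h)x‖ ≤ K h² N(x) for all h ∈ (0,h₀] and x ∈ D. Then for every t ∈ (0,1], every positive integer n with t/n ≤ h₀, and every x ∈ D: ‖F(t/n)^n x − T(t)x‖ ≤ (M² K e^{|ω|} / n) N(x). -/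

import Mathlib

open Filter Set

/-- Abstract first-order convergence from stability, invariance and local error
(telescoping / Lady Windermere argument). -/
theorem abstract_first_order_convergence
    {X : Type*} [NormedAddCommGroup X]
    (D : Set X) (N : X → ℝ) (hN : ∀ x ∈ D, 0 ≤ N x)
    (h₀ : ℝ) (hh₀ : 0 < h₀) (M : ℝ) (hM : 1 ≤ M) (ω : ℝ) (K : ℝ) (hK : 0 ≤ K)
    (T : ℝ → X → X)
    (hT0 : T 0 = id)
    (hTsg : ∀ s, 0 ≤ s → ∀ r, 0 ≤ r → ∀ x, T s (T r x) = T (s + r) x)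
    (F : ℝ → X → X)
    (hstab : ∀ h ∈ Set.Ioc (0:ℝ) h₀, ∀ k : ℕ, ∀ x y : X,
      ‖(F h)^[k] x - (F h)^[k] y‖ ≤ M * Real.exp (ω * (k * h)) * ‖x - y‖)
    (hinv : ∀ s ∈ Set.Icc (0:ℝ) 1, ∀ x ∈ D, T s x ∈ D ∧ N (T s x) ≤ M * N x)
    (hloc : ∀ h ∈ Set.Ioc (0:ℝ) h₀, ∀ x ∈ D, ‖F h x - T h x‖ ≤ K * h ^ 2 * N x) :
    ∀ t ∈ Set.Ioc (0:ℝ) 1, ∀ n : ℕ, 0 < n → t / n ≤ h₀ → ∀ x ∈ D,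
      ‖(F (t / n))^[n] x - T t x‖ ≤ M ^ 2 * K * Real.exp |ω| / n * N x := by
  intro t ht n hn hht x hx
  obtain ⟨ht0, ht1⟩ := ht
  set h := t / n with hh
  have hn0 : (0:ℝ) < n := by exact_mod_cast hn
  have hpos : 0 < h := div_pos ht0 hn0
  have hmem : h ∈ Set.Ioc (0:ℝ) h₀ := ⟨hpos, hht⟩
  have hnh : (n:ℝ) * h = t := by rw [hh]; field_simp [hn0.ne']
  have hNx : 0 ≤ N x := hN x hx
  set g : ℕ → X := fun j => (F h)^[n - j] (T (j * h) x) with hg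
  have hjh : ∀ j : ℕ, j ≤ n → (j:ℝ) * h ∈ Set.Icc (0:ℝ) 1 := by
    intro j hj
    refine ⟨by positivity, ?_⟩
    calc (j:ℝ) * h ≤ n * h := by
          apply mul_le_mul_of_nonneg_right _ hpos.le
          exact_mod_cast hj
      _ = t := hnh
      _ ≤ 1 := ht1
  set B := M ^ 2 * K * Real.exp |ω| * h ^ 2 * N x with hB
  have key : ∀ j < n, ‖g (j + 1) - g j‖ ≤ B := by
    intro j hj
    obtain ⟨hD, hNj⟩ := hinv _ (hjh j hj.le) x hx
    have hk : n - j = (n - (j + 1)) + 1 := by omega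
    have e1 : g j = (F h)^[n - (j + 1)] (F h (T (j * h) x)) := by
      simp only [hg, hk, Function.iterate_succ_apply]
    have e2 : g (j + 1) = (F h)^[n - (j + 1)] (T h (T (j * h) x)) := by
      simp only [hg]
      congr 1
      rw [hTsg h hpos.le _ (by positivity)]
      congr 1
      push_cast; ring
    rw [e1, e2]
    have hexp : Real.exp (ω * ((↑(n - (j + 1)) : ℝ) * h)) ≤ Real.exp |ω| := by
      apply Real.exp_le_exp.2
      have h1 : (↑(n - (j + 1)) : ℝ) * h ≤ 1 := (hjh (n - (j + 1)) (by omega)).2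
      have h0 : (0:ℝ) ≤ (↑(n - (j + 1)) : ℝ) * h := by positivity
      calc ω * ((↑(n - (j + 1)) : ℝ) * h) ≤ |ω| * ((↑(n - (j + 1)) : ℝ) * h) :=
            mul_le_mul_of_nonneg_right (le_abs_self ω) h0
        _ ≤ |ω| * 1 := mul_le_mul_of_nonneg_left h1 (abs_nonneg ω)
        _ = |ω| := mul_one _
    have hnorm : ‖T h (T (j * h) x) - F h (T (j * h) x)‖ ≤ K * h ^ 2 * (M * N x) := by
      rw [norm_sub_rev]
      calc ‖F h (T (j * h) x) - T h (T (j * h) x)‖ ≤ K * h ^ 2 * N (T (j * h) x) :=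
            hloc h hmem _ hD
        _ ≤ K * h ^ 2 * (M * N x) :=
            mul_le_mul_of_nonneg_left hNj (by positivity)
    calc ‖(F h)^[n - (j + 1)] (T h (T (j * h) x)) - (F h)^[n - (j + 1)] (F h (T (j * h) x))‖
        ≤ M * Real.exp (ω * ((↑(n - (j + 1)) : ℝ) * h)) *
            ‖T h (T (j * h) x) - F h (T (j * h) x)‖ := hstab h hmem _ _ _
      _ ≤ M * Real.exp |ω| * (K * h ^ 2 * (M * N x)) := by
          have hM0 : (0:ℝ) ≤ M := le_trans zero_le_one hM
          gcongr
      _ = B := by rw [hB]; ring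
  have hB0 : 0 ≤ B := by
    rw [hB]
    have hM0 : (0:ℝ) ≤ M := le_trans zero_le_one hM
    positivity
  have tel : ‖g n - g 0‖ ≤ n * B := by
    rw [← Finset.sum_range_sub g n]
    calc ‖∑ j ∈ Finset.range n, (g (j + 1) - g j)‖
        ≤ ∑ j ∈ Finset.range n, ‖g (j + 1) - g j‖ := norm_sum_le _ _
      _ ≤ ∑ _j ∈ Finset.range n, B :=
          Finset.sum_le_sum fun j hj => key j (Finset.mem_range.1 hj)
      _ = n * B := by rw [Finset.sum_const, Finset.card_range, nsmul_eq_mul]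
  have hg0 : g 0 = (F h)^[n] x := by simp [hg, hT0]
  have hgn : g n = T t x := by simp [hg, hnh]
  have main : ‖(F h)^[n] x - T t x‖ ≤ n * B := by
    rw [← hg0, ← hgn, norm_sub_rev]; exact tel
  refine le_trans main ?_
  have hnh2 : (n:ℝ) * h ^ 2 ≤ 1 / n := by
    have heq : (n:ℝ) * h ^ 2 = t ^ 2 / n := by
      rw [hh]; field_simp
    rw [heq]
    have ht2 : t ^ 2 ≤ 1 := by nlinarith
    gcongr
  have hC0 : 0 ≤ M ^ 2 * K * Real.exp |ω| * N x := by positivity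
  calc (n:ℝ) * B = (M ^ 2 * K * Real.exp |ω| * N x) * ((n:ℝ) * h ^ 2) := by rw [hB]; ring
    _ ≤ (M ^ 2 * K * Real.exp |ω| * N x) * (1 / n) :=
        mul_le_mul_of_nonneg_left hnh2 hC0
    _ = M ^ 2 * K * Real.exp |ω| / n * N x := by ring
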